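/- Let n ≥ 1 and let r ≡ 2 (mod 4), r ≥ 2. Then, as polynomials in q, Σ_{π ∈ A_{r,n}} q^{finv_A(π)} = 2^{n−1} · Π_{i=1}^{n} [(r/2)·i]_q, where [m]_q = 1 + q + ⋯ + q^{m−1}, and finv_A(π) = (r/2)·inv(|π|) + Σ_{i=1}^{n} (c_i(π) ⊘ 2) with c_i(π) = r − z_i(π^{−1}) (taken mod r) and inv(|π|) the ordinary inversion number of the underlying permutation |π|. -/

import Mathlib

open Multiplicative

namespace ACP

/-- The action of `Sₙ` on color vectors by permuting coordinates. -/
def permAct (r n : ℕ) : Equiv.Perm (Fin n) →* MulAut (Fin n → Multiplicative (ZMod r)) where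
  toFun τ :=
    { toFun := fun z => z ∘ τ.symm
      invFun := fun z => z ∘ τ
      left_inv := fun z => by ext i; simp
      right_inv := fun z => by ext i; simp
      map_mul' := fun z w => rfl }
  map_one' := by ext z i; rfl
  map_mul' a b := by ext z i; rfl

/-- The group of colored permutations `G_{r,n} = ℤ_r ≀ Sₙ`. -/
abbrev G (r n : ℕ) : Type := (Fin n → Multiplicative (ZMod r)) ⋊[permAct r n] Equiv.Perm (Fin n)

/-- The Coxeter-like generators: `gen r n 0 = s₀` colors the digit 1 by one color,
`gen r n i = sᵢ` (for `1 ≤ i ≤ n-1`) is the adjacent transposition `(i, i+1)`. -/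
def gen (r n : ℕ) (i : ℕ) : G r n :=
  if h : 0 < i ∧ i < n then
    ⟨1, Equiv.swap ⟨i - 1, by omega⟩ ⟨i, h.2⟩⟩
  else
    ⟨fun j => if (j : ℕ) = 0 then ofAdd (1 : ZMod r) else 1, 1⟩

def zmod2ToUnits : Multiplicative (ZMod 2) →* ℤˣ where
  toFun z := (-1) ^ (toAdd z).val
  map_one' := rfl
  map_mul' := by decide

def csumHom (r n : ℕ) (hr : 2 ∣ r) :
    (Fin n → Multiplicative (ZMod r)) →* Multiplicative (ZMod 2) where
  toFun z := ofAdd (∑ i, ZMod.castHom hr (ZMod 2) (toAdd (z i)))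
  map_one' := by simp
  map_mul' z w := by
    have h : ∀ i, ZMod.castHom hr (ZMod 2) (toAdd ((z * w) i))
        = ZMod.castHom hr (ZMod 2) (toAdd (z i)) + ZMod.castHom hr (ZMod 2) (toAdd (w i)) :=
      fun i => map_add _ _ _
    simp only [h, Finset.sum_add_distrib, ofAdd_add]

/-- The sign character of `G_{r,n}` (for even `r`): sends every Coxeter-like
generator `sᵢ` to `-1`. -/
noncomputable def sgn (r n : ℕ) (hr : 2 ∣ r) : G r n →* ℤˣ :=
  SemidirectProduct.lift (zmod2ToUnits.comp (csumHom r n hr)) Equiv.Perm.sign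
    (by
      intro g
      refine MonoidHom.ext fun z => ?_
      have h1 : ∀ a x : ℤˣ, a * x * a⁻¹ = x := fun a x => by
        rw [mul_comm a x, mul_inv_cancel_right]
      simp only [MonoidHom.comp_apply, MulEquiv.coe_toMonoidHom, MulAut.conj_apply, h1]
      congr 1
      show csumHom r n hr (z ∘ g.symm) = csumHom r n hr z
      unfold csumHom
      simp only [MonoidHom.coe_mk, OneHom.coe_mk]
      congr 1
      exact Equiv.sum_comp g.symm fun j => ZMod.castHom hr (ZMod 2) (toAdd (z j)))

/-- The group of alternating colored permutations `A_{r,n}`: the kernel of the sign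
character of `G_{r,n}`. -/
noncomputable def Arn (r n : ℕ) (hr : 2 ∣ r) : Subgroup (G r n) := (sgn r n hr).ker

/-- The generators of `A_{r,n}`: `agen r n 0 = a₀ = s₀²` and
`agen r n i = aᵢ = s₀^{r/2} sᵢ` for `i ≥ 1`. -/
def agen (r n : ℕ) (i : ℕ) : G r n :=
  if i = 0 then gen r n 0 ^ 2 else gen r n 0 ^ (r / 2) * gen r n i

/-- The generating set `𝒜 = {a₀, a₁, a₁⁻¹, a₂, …, a_{n-1}}` of `A_{r,n}`. -/
def Aset (r n : ℕ) : Set (G r n) :=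
  {x | ∃ i ≤ n - 1, x = agen r n i} ∪ {(agen r n 1)⁻¹}

/-- The Coxeter-like generating set `{s₀, …, s_{n-1}}` of `G_{r,n}`. -/
def Sset (r n : ℕ) : Set (G r n) := {x | ∃ i < n, x = gen r n i}

/-- Word length of `g` with respect to a generating set `B`. -/
noncomputable def wordLength {H : Type*} [Group H] (B : Set H) (g : H) : ℕ :=
  sInf {k | ∃ w : List H, (∀ x ∈ w, x ∈ B) ∧ w.prod = g ∧ w.length = k}

/-- The element `a₁² ∈ A_{r,n}`. -/
noncomputable def a1sq (r n : ℕ) (hr : 2 ∣ r) : ↥(Arn r n hr) :=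
  ⟨agen r n 1 ^ 2, by rw [Arn, MonoidHom.mem_ker, map_pow]; exact Int.units_sq _⟩

/-- The operator `a ⊘ 2` : the residue mod `r/2` of `a/2` (`a` even) or of
`(a + r/2)/2` (`a` odd). -/
def oslash (r a : ℕ) : ℕ :=
  if a % 2 = 0 then (a / 2) % (r / 2) else ((a + r / 2) / 2) % (r / 2)

/-- `z_i(π)`, the color of digit `i+1` of `π`, as a natural number in `{0, …, r-1}`. -/
def zval (r n : ℕ) (π : G r n) (i : Fin n) : ℕ := (toAdd (π.left i)).val

/-- `csum(π) = Σ z_i(π)`. -/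
def csum (r n : ℕ) (π : G r n) : ℕ := ∑ i, zval r n π i

/-- Rank of the colored letter `b^{[c]}` (with `1 ≤ b ≤ n`, `0 ≤ c ≤ r-1`) in the
length order `n^{[r-1]} < ⋯ < 1^{[1]} < 1 < 2 < ⋯ < n`. -/
def rank (r n : ℕ) (b c : ℕ) : ℕ :=
  if c = 0 then n * (r - 1) + (b - 1) else (n - b) * (r - 1) + (r - 1 - c)

/-- Rank (in the length order) of the letter in position `i` of the window of `π`. -/
def colRank (r n : ℕ) (π : G r n) (i : Fin n) : ℕ :=
  rank r n ((π.right i : ℕ) + 1) (zval r n π (π.right i))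

/-- The inversion number of `π ∈ G_{r,n}` with respect to the length order. -/
noncomputable def inv (r n : ℕ) (π : G r n) : ℕ :=
  Nat.card {p : Fin n × Fin n // p.1 < p.2 ∧ colRank r n π p.2 < colRank r n π p.1}

/-- The ordinary inversion number of a permutation. -/
noncomputable def invPerm (n : ℕ) (τ : Equiv.Perm (Fin n)) : ℕ :=
  Nat.card {p : Fin n × Fin n // p.1 < p.2 ∧ τ p.2 < τ p.1}

/-- The covering map `p : A_{r,n} → G_{r/2,n}`, `p(z, τ) = ((zᵢ ⊘ 2)ᵢ, τ)`. -/
def pmap (r n : ℕ) (π : G r n) : G (r / 2) n :=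
  ⟨fun i => ofAdd ((oslash r (zval r n π i) : ZMod (r / 2))), π.right⟩

/-- The section `s : G_{r/2,n} → A_{r,n}`: doubles all colors (mod `r`), adding `r/2`
to the color of the digit `1` when `inv(|π|)` is odd. -/
noncomputable def smap (r n : ℕ) (π : G (r / 2) n) : G r n :=
  ⟨fun d => ofAdd
      (((2 * zval (r / 2) n π d +
        if (d : ℕ) = 0 ∧ invPerm n π.right % 2 = 1 then r / 2 else 0 : ℕ) : ZMod r)),
   π.right⟩

/-- `c(π) = Σ_{i : z_i(π) ≠ 0} (i - 1)` (digits are `1`-based). -/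
def cstat (r n : ℕ) (π : G r n) : ℕ :=
  ∑ i : Fin n, if zval r n π i ≠ 0 then (i : ℕ) else 0

/-- The number of absolute transparent inversions of `π`. -/
noncomputable def tinv (r n : ℕ) (π : G r n) : ℕ :=
  Nat.card {p : Fin n × Fin n //
    zval r n π p.1 = r / 2 ∧ p.2 < p.1 ∧ π.right⁻¹ p.1 < π.right⁻¹ p.2}

/-- The (digit-indexed) Lehmer code `l_i = #{j : j > i, τ⁻¹(i) > τ⁻¹(j)}`. -/
noncomputable def lehmer (n : ℕ) (τ : Equiv.Perm (Fin n)) (i : Fin n) : ℕ :=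
  Nat.card {j : Fin n // i < j ∧ τ⁻¹ j < τ⁻¹ i}


/-- `μ(π)`: the minimum of `β(ω) + n(ω)` over all factorizations
`ω = b₀ s₀^{i₁} b₁ ⋯ s₀^{i_{k+1}} b_{k+1}` of `π`, where each `b_u` is a word in
`s₁, …, s_{n-1}` only, `n(ω)` is the number of letters `sᵢ` with `i ≠ 0`, and
`β(ω) = Σ_u (i_u ⊘ 2)`. -/
noncomputable def mu (r n : ℕ) (π : G r n) : ℕ :=
  sInf {m | ∃ (b₀ : List ℕ) (L : List (ℕ × List ℕ)),
    (∀ x ∈ b₀, 1 ≤ x ∧ x ≤ n - 1) ∧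
    (∀ q ∈ L, ∀ x ∈ q.2, 1 ≤ x ∧ x ≤ n - 1) ∧
    π = (b₀.map (gen r n)).prod *
        (L.map (fun q => gen r n 0 ^ q.1 * (q.2.map (gen r n)).prod)).prod ∧
    m = (L.map (fun q => oslash r q.1)).sum +
        (b₀.length + (L.map (fun q => q.2.length)).sum)}

/-- The flag-inversion number on `A_{r,n}`:
`finv_A(π) = (r/2)·inv(|π|) + Σᵢ (cᵢ(π) ⊘ 2)` where `cᵢ(π) = r - zᵢ(π⁻¹) (mod r)`. -/
noncomputable def finvA (r n : ℕ) (π : G r n) : ℕ :=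
  (r / 2) * invPerm n π.right + ∑ i, oslash r ((r - zval r n π⁻¹ i) % r)

/-- The number of (colored) right-to-left minima of `π` whose color is not in `{0, r/2}`. -/
noncomputable def rtlMinA (r n : ℕ) (π : G r n) : ℕ :=
  Nat.card {i : Fin n // (∀ j : Fin n, i < j → π.right i < π.right j) ∧
    zval r n π (π.right i) ≠ 0 ∧ zval r n π (π.right i) ≠ r / 2}

/-- The defining relators of the Coxeter-like presentation of `A_{r,n}` on generators
`x₀, …, x_{n-1}`. -/
def rels (r n : ℕ) : Set (FreeGroup (Fin n)) :=
  {w | ∃ i : Fin n, (i : ℕ) = 0 ∧ w = FreeGroup.of i ^ (r / 2)} ∪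
  {w | ∃ i : Fin n, (i : ℕ) = 1 ∧ w = FreeGroup.of i ^ 4} ∪
  {w | ∃ i : Fin n, 2 ≤ (i : ℕ) ∧ w = FreeGroup.of i ^ 2} ∪
  {w | ∃ i j : Fin n, (i : ℕ) ≠ 1 ∧ (j : ℕ) ≠ 1 ∧ (i : ℕ) + 1 < (j : ℕ) ∧
    w = FreeGroup.of i * FreeGroup.of j * (FreeGroup.of i)⁻¹ * (FreeGroup.of j)⁻¹} ∪
  {w | ∃ i j : Fin n, 1 ≤ (i : ℕ) ∧ (j : ℕ) = (i : ℕ) + 1 ∧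
    w = (FreeGroup.of i * FreeGroup.of j) ^ 3} ∪
  {w | ∃ i j : Fin n, (i : ℕ) = 0 ∧ (j : ℕ) = 1 ∧
    w = (FreeGroup.of i * FreeGroup.of j) ^ (2 * r)} ∪
  {w | ∃ i j : Fin n, (i : ℕ) = 0 ∧ (j : ℕ) = 1 ∧
    w = (FreeGroup.of i * (FreeGroup.of j)⁻¹) ^ (2 * r)} ∪
  {w | ∃ i j : Fin n, (i : ℕ) = 0 ∧ (j : ℕ) = 1 ∧
    w = FreeGroup.of i * FreeGroup.of j ^ 2 * (FreeGroup.of i)⁻¹ * (FreeGroup.of j ^ 2)⁻¹} ∪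
  {w | ∃ i j : Fin n, (i : ℕ) = 1 ∧ 2 < (j : ℕ) ∧
    w = FreeGroup.of i * FreeGroup.of j * FreeGroup.of i * (FreeGroup.of j)⁻¹}

end ACP


section Aux
open Multiplicative Finset

lemma invPerm_eq_card (n : ℕ) (τ : Equiv.Perm (Fin n)) :
    ACP.invPerm n τ =
      (Finset.univ.filter fun p : Fin n × Fin n => p.1 < p.2 ∧ τ p.2 < τ p.1).card := by
  rw [ACP.invPerm, Nat.card_eq_fintype_card, Fintype.card_subtype]

def dmap {n : ℕ} (p : Fin (n + 1)) (σ : Equiv.Perm (Fin n)) : Equiv.Perm (Fin (n + 1)) :=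
  (finSuccEquiv n).trans ((Equiv.optionCongr σ).trans (finSuccEquiv' p).symm)

lemma dmap_zero {n : ℕ} (p : Fin (n + 1)) (σ : Equiv.Perm (Fin n)) : dmap p σ 0 = p := by
  simp [dmap]

lemma dmap_succ {n : ℕ} (p : Fin (n + 1)) (σ : Equiv.Perm (Fin n)) (j : Fin n) :
    dmap p σ j.succ = p.succAbove (σ j) := by
  simp [dmap]

lemma dmap_bijective (n : ℕ) :
    Function.Bijective (fun q : Fin (n + 1) × Equiv.Perm (Fin n) => dmap q.1 q.2) := by
  rw [Fintype.bijective_iff_injective_and_card]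
  constructor
  · rintro ⟨p, σ⟩ ⟨p', σ'⟩ h
    simp only at h
    have hp : p = p' := by
      have := congrArg (fun τ : Equiv.Perm (Fin (n+1)) => τ 0) h
      simpa [dmap_zero] using this
    subst hp
    have hσ : σ = σ' := by
      ext j
      have := congrArg (fun τ : Equiv.Perm (Fin (n+1)) => τ j.succ) h
      simp only [dmap_succ] at this
      exact congrArg Fin.val (Fin.succAbove_right_injective this)
    simp [hσ]
  · simp [Fintype.card_perm, Nat.factorial_succ]

lemma invPerm_dmap {n : ℕ} (p : Fin (n + 1)) (σ : Equiv.Perm (Fin n)) :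
    ACP.invPerm (n + 1) (dmap p σ) = (p : ℕ) + ACP.invPerm n σ := by
  classical
  set τ := dmap p σ with hτ
  rw [invPerm_eq_card, invPerm_eq_card]
  set A := Finset.univ.filter fun q : Fin (n+1) × Fin (n+1) => q.1 < q.2 ∧ τ q.2 < τ q.1 with hA
  have memA : ∀ q : Fin (n+1) × Fin (n+1), q ∈ A ↔ q.1 < q.2 ∧ τ q.2 < τ q.1 := by
    intro q; simp [hA]
  rw [← Finset.card_filter_add_card_filter_not (s := A) (p := fun q => q.1 = 0)]
  have memA0 : ∀ q : Fin (n+1) × Fin (n+1),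
      q ∈ A.filter (fun q => q.1 = 0) ↔ (q.1 < q.2 ∧ τ q.2 < τ q.1) ∧ q.1 = 0 := by
    intro q; rw [Finset.mem_filter, memA]
  have memA1 : ∀ q : Fin (n+1) × Fin (n+1),
      q ∈ A.filter (fun q => ¬ q.1 = 0) ↔ (q.1 < q.2 ∧ τ q.2 < τ q.1) ∧ ¬ q.1 = 0 := by
    intro q; rw [Finset.mem_filter, memA]
  congr 1
  · -- pairs with first coordinate 0 : count = p
    have : (A.filter fun q => q.1 = 0).card = (Finset.range (p : ℕ)).card := by
      apply Finset.card_bij (fun q _ => (τ q.2 : ℕ))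
      · rintro ⟨i, j⟩ hq
        rw [memA0] at hq
        obtain ⟨⟨h1, h2⟩, h3⟩ := hq
        simp only at h3
        subst h3
        rw [dmap_zero] at h2
        simpa [Finset.mem_range] using h2
      · rintro ⟨i, j⟩ hq ⟨i', j'⟩ hq' h
        rw [memA0] at hq hq'
        have hj : τ j = τ j' := Fin.val_injective h
        have := τ.injective hj
        simp only at hq hq'
        simp [hq.2, hq'.2, this, Prod.ext_iff]
      · intro k hk
        simp only [Finset.mem_range] at hk
        have hkn : k < n + 1 := lt_of_lt_of_le hk (by omega : (p:ℕ) ≤ n + 1)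
        refine ⟨(0, τ.symm ⟨k, hkn⟩), ?_, ?_⟩
        · rw [memA0]
          refine ⟨⟨?_, ?_⟩, rfl⟩
          · rw [Fin.pos_iff_ne_zero]
            intro h0
            have h0' : τ 0 = ⟨k, hkn⟩ := by rw [← h0]; simp
            rw [dmap_zero] at h0'
            have : (p : ℕ) = k := congrArg Fin.val h0'
            omega
          · show τ (τ.symm _) < τ 0
            rw [Equiv.apply_symm_apply, dmap_zero]
            exact hk
        · simp
    rw [this, Finset.card_range]
  · -- pairs with both coordinates positive : count = inv σ
    have h2ne : ∀ q : Fin (n+1) × Fin (n+1), q ∈ A.filter (fun q => ¬ q.1 = 0) → q.2 ≠ 0 := by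
      intro q hq
      rw [memA1] at hq
      intro h0
      rw [h0] at hq
      exact absurd hq.1.1 (by simp [Fin.not_lt, Fin.le_def])
    have h1ne : ∀ q : Fin (n+1) × Fin (n+1), q ∈ A.filter (fun q => ¬ q.1 = 0) → q.1 ≠ 0 := by
      intro q hq; rw [memA1] at hq; exact hq.2
    apply Finset.card_bij
      (fun (q : Fin (n+1) × Fin (n+1)) (hq : q ∈ A.filter fun q => ¬ q.1 = 0) =>
        ((q.1.pred (h1ne q hq)), (q.2.pred (h2ne q hq))))
    · rintro q hq
      have h1 := h1ne q hq
      have h2 := h2ne q hq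
      rw [memA1] at hq
      obtain ⟨⟨ha, hb⟩, -⟩ := hq
      rw [Finset.mem_filter]
      refine ⟨Finset.mem_univ _, ?_, ?_⟩
      · simp only [Fin.lt_def, Fin.coe_pred]
        have := Fin.lt_def.mp ha
        have h1' : (q.1 : ℕ) ≠ 0 := fun h => h1 (Fin.ext h)
        omega
      · have e1 : q.1 = (q.1.pred h1).succ := (Fin.succ_pred _ _).symm
        have e2 : q.2 = (q.2.pred h2).succ := (Fin.succ_pred _ _).symm
        rw [e1, e2, dmap_succ, dmap_succ] at hb
        exact Fin.succAbove_lt_succAbove_iff.mp hb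
    · rintro ⟨a, b⟩ hq ⟨a', b'⟩ hq' h
      simp only [Prod.mk.injEq] at h ⊢
      constructor
      · rw [← Fin.succ_pred a (h1ne _ hq), ← Fin.succ_pred a' (h1ne _ hq'), h.1]
      · rw [← Fin.succ_pred b (h2ne _ hq), ← Fin.succ_pred b' (h2ne _ hq'), h.2]
    · intro q hq
      rw [Finset.mem_filter] at hq
      obtain ⟨-, ha, hb⟩ := hq
      refine ⟨(q.1.succ, q.2.succ), ?_, by simp⟩
      rw [memA1]
      refine ⟨⟨by simpa using ha, ?_⟩, by simp [Fin.succ_ne_zero]⟩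
      rw [dmap_succ, dmap_succ]
      exact Fin.succAbove_lt_succAbove_iff.mpr hb

open Polynomial in
lemma mahonian (Y : Polynomial ℤ) (n : ℕ) :
    ∑ τ : Equiv.Perm (Fin n), Y ^ ACP.invPerm n τ =
      ∏ i ∈ Finset.range n, ∑ k ∈ Finset.range (i + 1), Y ^ k := by
  induction n with
  | zero =>
    rw [Finset.range_zero, Finset.prod_empty]
    have h0 : ∀ τ : Equiv.Perm (Fin 0), ACP.invPerm 0 τ = 0 := by
      intro τ
      rw [ACP.invPerm]
      exact Nat.card_of_isEmpty
    simp only [h0, pow_zero]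
    rw [Finset.sum_const, Finset.card_univ]
    simp [Fintype.card_perm]
  | succ n ih =>
    rw [← Fintype.sum_bijective _ (dmap_bijective n)
      (fun q => Y ^ ((q.1 : ℕ) + ACP.invPerm n q.2)) (fun τ => Y ^ ACP.invPerm (n+1) τ)
      (fun q => by
        show Y ^ ((q.1 : ℕ) + ACP.invPerm n q.2) = Y ^ ACP.invPerm (n + 1) (dmap q.1 q.2)
        rw [invPerm_dmap])]
    rw [Fintype.sum_prod_type]
    simp only [pow_add]
    rw [← Finset.sum_mul_sum]
    rw [Fin.sum_univ_eq_sum_range (fun k => Y ^ k) (n+1), ih, Finset.prod_range_succ]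
    ring


lemma oslash_lt {r : ℕ} (hm : 0 < r / 2) (a : ℕ) : ACP.oslash r a < r / 2 := by
  rw [ACP.oslash]; split <;> exact Nat.mod_lt _ hm

lemma oslash_inj {r : ℕ} (hr : r % 4 = 2) {x y : ℕ} (hx : x < r) (hy : y < r)
    (hp : x % 2 = y % 2) (ho : ACP.oslash r x = ACP.oslash r y) : x = y := by
  set m := r / 2 with hm
  rcases Nat.eq_zero_or_pos (x % 2) with h0 | h1
  · have hy0 : y % 2 = 0 := by omega
    have hox : ACP.oslash r x = x / 2 := by
      rw [ACP.oslash, if_pos h0, Nat.mod_eq_of_lt (by omega)]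
    have hoy : ACP.oslash r y = y / 2 := by
      rw [ACP.oslash, if_pos hy0, Nat.mod_eq_of_lt (by omega)]
    omega
  · have hx2 : x % 2 = 1 := by omega
    have hy2 : y % 2 = 1 := by omega
    obtain ⟨t, ht⟩ : ∃ t, m = 2 * t + 1 := ⟨m / 2, by omega⟩
    obtain ⟨a, ha⟩ : ∃ a, x = 2 * a + 1 := ⟨x / 2, by omega⟩
    obtain ⟨b, hb⟩ : ∃ b, y = 2 * b + 1 := ⟨y / 2, by omega⟩
    have hox : ACP.oslash r x = (a + (t + 1)) % m := by
      rw [ACP.oslash, if_neg (by omega)]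
      congr 1
      omega
    have hoy : ACP.oslash r y = (b + (t + 1)) % m := by
      rw [ACP.oslash, if_neg (by omega)]
      congr 1
      omega
    have hmod : a % m = b % m := by
      have h1 : a + (t + 1) ≡ b + (t + 1) [MOD m] := by
        rw [Nat.ModEq, ← hox, ← hoy]
        exact ho
      exact Nat.ModEq.add_right_cancel' (t + 1) h1
    rw [Nat.mod_eq_of_lt (by omega), Nat.mod_eq_of_lt (by omega)] at hmod
    omega

noncomputable def e2 (r : ℕ) (hr : r % 4 = 2) :
    Multiplicative (ZMod r) ≃ ZMod 2 × Fin (r / 2) :=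
  haveI : NeZero r := ⟨by omega⟩
  Equiv.ofBijective
    (fun a => (((toAdd a).val : ZMod 2),
      ⟨ACP.oslash r (toAdd a).val, oslash_lt (by omega) _⟩)) <| by
    rw [Fintype.bijective_iff_injective_and_card]
    constructor
    · intro a b h
      rw [Prod.ext_iff] at h
      obtain ⟨h1, h2⟩ := h
      have hv : (toAdd a).val % 2 = (toAdd b).val % 2 := by
        simpa using (ZMod.natCast_eq_natCast_iff' _ _ 2).mp h1
      have ho : ACP.oslash r (toAdd a).val = ACP.oslash r (toAdd b).val :=
        congrArg Fin.val h2
      have := oslash_inj hr (ZMod.val_lt _) (ZMod.val_lt _) hv ho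
      exact ZMod.val_injective r this
    · rw [Fintype.card_prod, ZMod.card, Fintype.card_fin, Fintype.card_multiplicative,
        ZMod.card]
      omega

lemma e2_fst {r : ℕ} (hr : r % 4 = 2) (a : Multiplicative (ZMod r)) :
    (e2 r hr a).1 = ((toAdd a).val : ZMod 2) := rfl

lemma e2_snd {r : ℕ} (hr : r % 4 = 2) (a : Multiplicative (ZMod r)) :
    ((e2 r hr a).2 : ℕ) = ACP.oslash r (toAdd a).val := rfl

lemma fiber_card (n : ℕ) (hn : 1 ≤ n) (e : ZMod 2) :
    (Finset.univ.filter fun ε : Fin n → ZMod 2 => ∑ i, ε i = e).card = 2 ^ (n - 1) := by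
  classical
  set i0 : Fin n := ⟨0, hn⟩
  have hsum : ∀ (ε : Fin n → ZMod 2), ∑ i, ε i = ε i0 + ∑ i ∈ univ \ {i0}, ε i := by
    intro ε
    rw [← Finset.sum_update_of_mem (Finset.mem_univ i0)]
    congr 1
    ext i
    by_cases h : i = i0 <;> simp [h]
  have hupd : ∀ (ε : Fin n → ZMod 2),
      ∑ i, Function.update ε i0 (ε i0 + 1) i = (∑ i, ε i) + 1 := by
    intro ε
    rw [Finset.sum_update_of_mem (Finset.mem_univ i0), hsum ε]
    ring
  have key : ∀ e : ZMod 2,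
      (Finset.univ.filter fun ε : Fin n → ZMod 2 => ∑ i, ε i = e).card =
      (Finset.univ.filter fun ε : Fin n → ZMod 2 => ∑ i, ε i = e + 1).card := by
    intro e
    apply Finset.card_nbij' (fun ε => Function.update ε i0 (ε i0 + 1))
      (fun ε => Function.update ε i0 (ε i0 + 1))
    · intro ε hε
      simp only [Finset.mem_coe, Finset.mem_filter] at hε ⊢
      exact ⟨Finset.mem_univ _, by rw [hupd, hε.2]⟩
    · intro ε hε
      simp only [Finset.mem_coe, Finset.mem_filter] at hε ⊢
      refine ⟨Finset.mem_univ _, ?_⟩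
      rw [hupd, hε.2]
      have : ∀ u : ZMod 2, u + 1 + 1 = u := by decide
      exact this e
    · intro ε _
      beta_reduce
      rw [Function.update_idem, Function.update_self]
      have : ∀ u : ZMod 2, u + 1 + 1 = u := by decide
      rw [this]
      exact Function.update_eq_self _ _
    · intro ε _
      beta_reduce
      rw [Function.update_idem, Function.update_self]
      have : ∀ u : ZMod 2, u + 1 + 1 = u := by decide
      rw [this]
      exact Function.update_eq_self _ _
  have split : (Finset.univ.filter fun ε : Fin n → ZMod 2 => ∑ i, ε i = e).card +
      (Finset.univ.filter fun ε : Fin n → ZMod 2 => ∑ i, ε i = e + 1).card = 2 ^ n := by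
    have hneg : (Finset.univ.filter fun ε : Fin n → ZMod 2 => ¬ (∑ i, ε i = e)) =
        (Finset.univ.filter fun ε : Fin n → ZMod 2 => ∑ i, ε i = e + 1) := by
      apply Finset.filter_congr
      intro ε _
      have : ∀ u e : ZMod 2, ¬ u = e ↔ u = e + 1 := by decide
      exact this _ _
    rw [← hneg, Finset.card_filter_add_card_filter_not, Finset.card_univ,
      Fintype.card_fun]
    simp [ZMod.card]
  have keq := key e
  have h2n : 2 ^ n = 2 * 2 ^ (n - 1) := by
    cases n with
    | zero => omega
    | succ k => rw [Nat.add_sub_cancel, pow_succ, Nat.mul_comm]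
  have h2 : 2 * (Finset.univ.filter fun ε : Fin n → ZMod 2 => ∑ i, ε i = e).card =
      2 * 2 ^ (n - 1) := by
    calc 2 * (Finset.univ.filter fun ε : Fin n → ZMod 2 => ∑ i, ε i = e).card
        = (Finset.univ.filter fun ε : Fin n → ZMod 2 => ∑ i, ε i = e).card +
          (Finset.univ.filter fun ε : Fin n → ZMod 2 => ∑ i, ε i = e).card := two_mul _
      _ = (Finset.univ.filter fun ε : Fin n → ZMod 2 => ∑ i, ε i = e).card +
          (Finset.univ.filter fun ε : Fin n → ZMod 2 => ∑ i, ε i = e + 1).card := by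
            rw [keq]
      _ = 2 ^ n := split
      _ = 2 * 2 ^ (n - 1) := h2n
  exact Nat.eq_of_mul_eq_mul_left two_pos h2

open Polynomial in
lemma geom_block (m k : ℕ) (hm : 0 < m) :
    (∑ v ∈ range m, (X : ℤ[X]) ^ v) * (∑ j ∈ range (k + 1), (X : ℤ[X]) ^ (m * j)) =
      ∑ j ∈ range (m * (k + 1)), (X : ℤ[X]) ^ j := by
  rw [Finset.sum_mul_sum]
  rw [← Finset.sum_product']
  apply Finset.sum_nbij' (fun q : ℕ × ℕ => m * q.2 + q.1) (fun a => (a % m, a / m))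
  · rintro ⟨v, j⟩ hq
    simp only [Finset.mem_product, Finset.mem_range] at hq
    rw [Finset.mem_range]
    have : m * (j + 1) ≤ m * (k + 1) := Nat.mul_le_mul_left m (by omega)
    calc m * j + v < m * j + m := by omega
      _ = m * (j + 1) := by ring
      _ ≤ m * (k + 1) := this
  · intro a ha
    rw [Finset.mem_range] at ha
    simp only [Finset.mem_product, Finset.mem_range]
    exact ⟨Nat.mod_lt _ hm, by
      rw [Nat.div_lt_iff_lt_mul hm]
      calc a < m * (k + 1) := ha
        _ = (k + 1) * m := Nat.mul_comm _ _⟩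
  · rintro ⟨v, j⟩ hq
    simp only [Finset.mem_product, Finset.mem_range] at hq
    have h1 : (m * j + v) % m = v := by
      rw [Nat.mul_add_mod, Nat.mod_eq_of_lt hq.1]
    have h2 : (m * j + v) / m = j := by
      rw [Nat.mul_add_div hm, Nat.div_eq_of_lt hq.1, Nat.add_zero]
    simp [h1, h2]
  · intro a _
    simp [Nat.div_add_mod, Nat.mul_comm]
  · rintro ⟨v, j⟩ _
    rw [← pow_add]
    congr 1
    omega

open Polynomial in
lemma innerColorSum (r n : ℕ) [NeZero r] (hr : r % 4 = 2) (hn : 1 ≤ n) (e : ZMod 2) :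
    ∑ z : Fin n → Multiplicative (ZMod r),
      (if (∑ i, (((toAdd (z i)).val : ℕ) : ZMod 2)) = e then
        (X : ℤ[X]) ^ (∑ i, ACP.oslash r (toAdd (z i)).val) else 0)
    = 2 ^ (n - 1) * (∑ k ∈ range (r / 2), (X : ℤ[X]) ^ k) ^ n := by
  classical
  set E := (Equiv.piCongrRight fun _ : Fin n => e2 r hr).trans
    (Equiv.arrowProdEquivProdArrow _ _ _) with hE
  have key : ∀ z : Fin n → Multiplicative (ZMod r),
      (if (∑ i, (((toAdd (z i)).val : ℕ) : ZMod 2)) = e then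
        (X : ℤ[X]) ^ (∑ i, ACP.oslash r (toAdd (z i)).val) else 0) =
      (fun p : (Fin n → ZMod 2) × (Fin n → Fin (r / 2)) =>
        if (∑ i, p.1 i) = e then (X : ℤ[X]) ^ (∑ i, (p.2 i : ℕ)) else 0) (E z) :=
    fun z => rfl
  rw [Finset.sum_congr rfl (fun z _ => key z),
    Equiv.sum_comp E (fun p : (Fin n → ZMod 2) × (Fin n → Fin (r / 2)) =>
      if (∑ i, p.1 i) = e then (X : ℤ[X]) ^ (∑ i, (p.2 i : ℕ)) else 0)]
  rw [Fintype.sum_prod_type]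
  have step1 : ∀ ε : Fin n → ZMod 2,
      (∑ v : Fin n → Fin (r / 2),
        if (∑ i, ε i) = e then (X : ℤ[X]) ^ (∑ i, (v i : ℕ)) else 0) =
      (if (∑ i, ε i) = e then
        (∑ v : Fin n → Fin (r / 2), (X : ℤ[X]) ^ (∑ i, (v i : ℕ))) else 0) := by
    intro ε
    split <;> simp
  simp only [step1]
  rw [← Finset.sum_filter, Finset.sum_const, fiber_card n hn e]
  have hT : (∑ v : Fin n → Fin (r / 2), (X : ℤ[X]) ^ (∑ i, (v i : ℕ))) =
      (∑ k ∈ range (r / 2), (X : ℤ[X]) ^ k) ^ n := by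
    have h1 : ∀ v : Fin n → Fin (r / 2),
        (X : ℤ[X]) ^ (∑ i, (v i : ℕ)) = ∏ i : Fin n, (X : ℤ[X]) ^ (v i : ℕ) := by
      intro v
      rw [Finset.prod_pow_eq_pow_sum]
    simp only [h1]
    rw [← Fintype.piFinset_univ, ← Finset.prod_univ_sum (fun _ => Finset.univ)
      (fun (_ : Fin n) (j : Fin (r / 2)) => (X : ℤ[X]) ^ (j : ℕ))]
    rw [Finset.prod_const, Finset.card_univ, Fintype.card_fin]
    congr 1
    rw [← Fin.sum_univ_eq_sum_range (fun k => (X : ℤ[X]) ^ k) (r / 2)]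
  rw [hT, nsmul_eq_mul]
  push_cast
  ring


end Aux

section Aux2
open Multiplicative Finset

def prodEquivG (r n : ℕ) :
    ((Fin n → Multiplicative (ZMod r)) × Equiv.Perm (Fin n)) ≃ ACP.G r n where
  toFun p := ⟨p.1, p.2⟩
  invFun g := (g.left, g.right)
  left_inv p := rfl
  right_inv g := by cases g; rfl

lemma finvA_mk (r n : ℕ) [NeZero r] (z : Fin n → Multiplicative (ZMod r))
    (τ : Equiv.Perm (Fin n)) :
    ACP.finvA r n (⟨z, τ⟩ : ACP.G r n) =
      (r / 2) * ACP.invPerm n τ + ∑ i, ACP.oslash r (toAdd (z i)).val := by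
  rw [ACP.finvA]
  congr 1
  have hz : ∀ i, (r - ACP.zval r n (⟨z, τ⟩ : ACP.G r n)⁻¹ i) % r
      = (toAdd (z (τ i))).val := by
    intro i
    have hr0 : 0 < r := Nat.pos_of_ne_zero (NeZero.ne r)
    have hzv : ACP.zval r n (⟨z, τ⟩ : ACP.G r n)⁻¹ i = (-(toAdd (z (τ i)))).val := rfl
    rw [hzv]
    set a := toAdd (z (τ i)) with ha
    rcases eq_or_ne a 0 with h | h
    · rw [h]
      simp [ZMod.neg_val]
    · rw [ZMod.neg_val, if_neg h]
      have hv : a.val < r := ZMod.val_lt a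
      have : r - (r - a.val) = a.val := by omega
      rw [this, Nat.mod_eq_of_lt hv]
  calc ∑ i, ACP.oslash r ((r - ACP.zval r n (⟨z, τ⟩ : ACP.G r n)⁻¹ i) % r)
      = ∑ i, ACP.oslash r (toAdd (z (τ i))).val := by
        apply Finset.sum_congr rfl
        intro i _
        rw [hz i]
    _ = ∑ i, ACP.oslash r (toAdd (z i)).val :=
        Equiv.sum_comp τ (fun j => ACP.oslash r (toAdd (z j)).val)

lemma mem_Arn_iff (r n : ℕ) (hr : r % 4 = 2)
    (z : Fin n → Multiplicative (ZMod r)) (τ : Equiv.Perm (Fin n)) :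
    ((⟨z, τ⟩ : ACP.G r n) ∈ ACP.Arn r n (by omega : (2:ℕ) ∣ r)) ↔
      (∑ i, (((toAdd (z i)).val : ℕ) : ZMod 2)) =
        (if Equiv.Perm.sign τ = 1 then 0 else 1) := by
  haveI : NeZero r := ⟨by omega⟩
  rw [ACP.Arn, MonoidHom.mem_ker]
  have hg : (⟨z, τ⟩ : ACP.G r n) = SemidirectProduct.inl z * SemidirectProduct.inr τ :=
    (SemidirectProduct.inl_left_mul_inr_right _).symm
  rw [hg, map_mul, ACP.sgn, SemidirectProduct.lift_inl, SemidirectProduct.lift_inr]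
  have hcs : ACP.csumHom r n (by omega : (2:ℕ) ∣ r) z =
      ofAdd (∑ i, (((toAdd (z i)).val : ℕ) : ZMod 2)) := by
    rw [ACP.csumHom]
    simp only [MonoidHom.coe_mk, OneHom.coe_mk]
    congr 1
    apply Finset.sum_congr rfl
    intro i _
    rw [ZMod.castHom_apply]
    exact (ZMod.natCast_val _).symm
  rw [MonoidHom.comp_apply, hcs]
  set s := ∑ i, (((toAdd (z i)).val : ℕ) : ZMod 2) with hsdef
  clear_value s
  have hu : s = 0 ∨ s = 1 := by
    have : ∀ u : ZMod 2, u = 0 ∨ u = 1 := by decide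
    exact this s
  have hz2 : ∀ u : ZMod 2, ACP.zmod2ToUnits (ofAdd u) = (-1 : ℤˣ) ^ u.val := fun _ => rfl
  rcases hu with h | h <;>
    rcases Int.units_eq_one_or (Equiv.Perm.sign τ) with hsg | hsg <;>
      rw [h, hsg, hz2] <;> simp [ZMod.val_zero, ZMod.val_one]

end Aux2

open Polynomial Multiplicative Finset in
/-- the generating function of the flag-inversion number `finv_A` over
`A_{r,n}` is `2^{n-1} Π_{i=1}^{n} [(r/2)·i]_q`. -/
theorem finvA_genfun (r n : ℕ) (hn : 1 ≤ n) (hr : r % 4 = 2) :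
    ∑ᶠ π ∈ (ACP.Arn r n (by omega) : Set (ACP.G r n)), (X : ℤ[X]) ^ ACP.finvA r n π =
      2 ^ (n - 1) * ∏ i ∈ Finset.range n,
        ∑ k ∈ Finset.range (r / 2 * (i + 1)), (X : ℤ[X]) ^ k := by
  classical
  haveI : NeZero r := ⟨by omega⟩
  haveI : Fintype (ACP.G r n) := Fintype.ofEquiv _ (prodEquivG r n)
  have hm : 0 < r / 2 := by omega
  -- Step 1 : finsum over the subgroup as a finite sum with indicator
  have hset : (ACP.Arn r n (by omega) : Set (ACP.G r n)) =
      ↑(Finset.univ.filter fun π : ACP.G r n => π ∈ ACP.Arn r n (by omega)) := by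
    ext π
    simp
  rw [hset, finsum_mem_coe_finset, Finset.sum_filter]
  -- Step 2 : sum over pairs (z, τ)
  rw [← Equiv.sum_comp (prodEquivG r n)
    (fun π => if π ∈ ACP.Arn r n (by omega) then (X : ℤ[X]) ^ ACP.finvA r n π else 0)]
  rw [Fintype.sum_prod_type]
  have hterm : ∀ (z : Fin n → Multiplicative (ZMod r)) (τ : Equiv.Perm (Fin n)),
      (if prodEquivG r n (z, τ) ∈ ACP.Arn r n (by omega) then
        (X : ℤ[X]) ^ ACP.finvA r n (prodEquivG r n (z, τ)) else 0) =
      (if (∑ i, (((toAdd (z i)).val : ℕ) : ZMod 2)) =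
          (if Equiv.Perm.sign τ = 1 then 0 else 1) then
        (X : ℤ[X]) ^ (r / 2 * ACP.invPerm n τ) *
          (X : ℤ[X]) ^ (∑ i, ACP.oslash r (toAdd (z i)).val) else 0) := by
    intro z τ
    have hpe : prodEquivG r n (z, τ) = (⟨z, τ⟩ : ACP.G r n) := rfl
    rw [hpe, finvA_mk r n z τ, pow_add]
    congr 1
    exact propext (mem_Arn_iff r n hr z τ)
  simp only [hterm]
  rw [Finset.sum_comm]
  have hinner : ∀ τ : Equiv.Perm (Fin n),
      (∑ z : Fin n → Multiplicative (ZMod r),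
        if (∑ i, (((toAdd (z i)).val : ℕ) : ZMod 2)) =
            (if Equiv.Perm.sign τ = 1 then 0 else 1) then
          (X : ℤ[X]) ^ (r / 2 * ACP.invPerm n τ) *
            (X : ℤ[X]) ^ (∑ i, ACP.oslash r (toAdd (z i)).val) else 0) =
      (X : ℤ[X]) ^ (r / 2 * ACP.invPerm n τ) *
        (2 ^ (n - 1) * (∑ k ∈ range (r / 2), (X : ℤ[X]) ^ k) ^ n) := by
    intro τ
    rw [← innerColorSum r n hr hn (if Equiv.Perm.sign τ = 1 then 0 else 1), Finset.mul_sum]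
    apply Finset.sum_congr rfl
    intro z _
    rw [mul_ite, mul_zero]
  simp only [hinner]
  rw [← Finset.sum_mul]
  have hmah : (∑ τ : Equiv.Perm (Fin n), (X : ℤ[X]) ^ (r / 2 * ACP.invPerm n τ)) =
      ∏ i ∈ range n, ∑ k ∈ range (i + 1), ((X : ℤ[X]) ^ (r / 2)) ^ k := by
    rw [← mahonian ((X : ℤ[X]) ^ (r / 2)) n]
    apply Finset.sum_congr rfl
    intro τ _
    rw [← pow_mul]
  rw [hmah]
  have hSn : (∑ k ∈ range (r / 2), (X : ℤ[X]) ^ k) ^ n =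
      ∏ _i ∈ range n, (∑ k ∈ range (r / 2), (X : ℤ[X]) ^ k) := by
    rw [Finset.prod_const, Finset.card_range]
  rw [hSn]
  rw [show (∏ i ∈ range n, ∑ k ∈ range (i + 1), ((X : ℤ[X]) ^ (r / 2)) ^ k) *
      (2 ^ (n - 1) * ∏ _i ∈ range n, (∑ k ∈ range (r / 2), (X : ℤ[X]) ^ k)) =
      2 ^ (n - 1) * ((∏ _i ∈ range n, (∑ k ∈ range (r / 2), (X : ℤ[X]) ^ k)) *
        (∏ i ∈ range n, ∑ k ∈ range (i + 1), ((X : ℤ[X]) ^ (r / 2)) ^ k)) by ring]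
  congr 1
  rw [← Finset.prod_mul_distrib]
  apply Finset.prod_congr rfl
  intro i _
  have := geom_block (r / 2) i hm
  simp only [← pow_mul] at this ⊢
  exact this
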